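/- Let $f(x)=\sum_{k=0}^\infty c_k x^k$ be a power series with nonnegative coefficients and radius of convergence $r$, and define $\partial f(x)=\sum_{k=0}^\infty c_{k+1}x^k$. Let $G$ be a finite directed weighted graph without loops with adjacency matrix $A$, and $V=B^{\circ 1/2}$ the entrywise square root of its Hashimoto matrix. Then for $|t|<r/\rho(V)$, $\sum_{k=0}^\infty c_k t^k p_k(A) = c_0 I + t\,L^T\sqrt{Z}\,\partial f(tV)\,\sqrt{Z}\,R$, where $\partial f(tV)=\sum_{k=0}^\infty c_{k+1}t^kV^k$. -/

import Mathlib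

open Matrix

/-- The `m × n` incidence matrix associated with an endpoint map `f` on edge labels. -/
def incMat {n m : ℕ} (f : Fin m → Fin n) : Matrix (Fin m) (Fin n) ℝ :=
  Matrix.of fun e j => if f e = j then (1 : ℝ) else 0

/-- Entrywise (nonnegative) square root of a real matrix. -/
noncomputable def esqrt {α : Type*} (M : Matrix α α ℝ) : Matrix α α ℝ :=
  Matrix.of fun i j => Real.sqrt (M i j)

/-- The spectral radius of a real matrix: the supremum of the absolute values of its
complex eigenvalues. -/
noncomputable def specRad {m : ℕ} (V : Matrix (Fin m) (Fin m) ℝ) : ℝ :=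
  sSup {x : ℝ | ∃ μ ∈ spectrum ℂ (V.map Complex.ofReal), x = ‖μ‖}

open scoped Classical in
/-- `pMat A k` is the matrix whose `(i,j)` entry is the weighted sum over all
nonbacktracking walks of length `k` from node `i` to node `j` (the weight of a walk
being the product of the entries of `A` along its steps; node sequences that do not
follow edges of the graph contribute zero), with `pMat A 0 = I`. -/
noncomputable def pMat {n : ℕ} (A : Matrix (Fin n) (Fin n) ℝ) : ℕ → Matrix (Fin n) (Fin n) ℝ
  | 0 => 1
  | Nat.succ k => Matrix.of fun i j =>
      ∑ v ∈ Finset.univ.filter (fun v : Fin (k + 2) → Fin n =>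
          v 0 = i ∧ v (Fin.last (k + 1)) = j ∧
          ∀ t : Fin k, v t.castSucc.castSucc ≠ v t.succ.succ),
        ∏ t : Fin (k + 1), A (v t.castSucc) (v t.succ)


lemma pow_path {M : ℕ} (V : Matrix (Fin M) (Fin M) ℝ) (k : ℕ) (e f : Fin M) :
    (V ^ k) e f = ∑ E : Fin (k+1) → Fin M,
      if E 0 = e ∧ E (Fin.last k) = f then ∏ s : Fin k, V (E s.castSucc) (E s.succ) else 0 := by
  induction k generalizing e with
  | zero =>
    rw [pow_zero]
    rw [show (∑ E : Fin 1 → Fin M,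
        if E 0 = e ∧ E (Fin.last 0) = f then ∏ s : Fin 0, V (E s.castSucc) (E s.succ) else 0)
      = ∑ a : Fin M, if a = e ∧ a = f then 1 else 0 from
        Fintype.sum_equiv (Equiv.funUnique (Fin 1) (Fin M)) _ _ (by
          intro E
          simp [Equiv.funUnique, Fin.last])]
    by_cases hef : e = f
    · subst hef; simp [Matrix.one_apply]
    · rw [Matrix.one_apply_ne hef]
      rw [Finset.sum_eq_zero]
      intro a _
      by_cases ha : a = e
      · subst ha; simp [hef]
      · simp [ha]
  | succ k ih =>
    rw [pow_succ']
    rw [Matrix.mul_apply]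
    have key : (∑ E : Fin (k+2) → Fin M,
        if E 0 = e ∧ E (Fin.last (k+1)) = f then ∏ s : Fin (k+1), V (E s.castSucc) (E s.succ) else 0)
      = ∑ p : Fin M × (Fin (k+1) → Fin M),
          if p.1 = e ∧ p.2 (Fin.last k) = f then
            V p.1 (p.2 0) * ∏ s : Fin k, V (p.2 s.castSucc) (p.2 s.succ) else 0 := by
      refine (Fintype.sum_equiv (Fin.consEquiv (fun _ : Fin (k+2) => Fin M)) _ _ ?_).symm
      rintro ⟨g, E⟩
      simp only [Fin.consEquiv_apply, ← Fin.succ_last, Fin.prod_univ_succ, ← Fin.succ_castSucc,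
        Fin.cons_succ, Fin.castSucc_zero, Fin.cons_zero]
    rw [key, Fintype.sum_prod_type]
    rw [Finset.sum_comm]
    have lhs : ∀ g : Fin M, V e g * (V ^ k) g f
        = ∑ E : Fin (k+1) → Fin M, if E 0 = g ∧ E (Fin.last k) = f then
            V e g * ∏ s : Fin k, V (E s.castSucc) (E s.succ) else 0 := by
      intro g
      rw [ih g, Finset.mul_sum]
      exact Finset.sum_congr rfl fun E _ => by by_cases h : E 0 = g ∧ E (Fin.last k) = f <;> simp [h]
    simp_rw [lhs]
    rw [Finset.sum_comm]
    refine Finset.sum_congr rfl fun E _ => ?_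
    simp_rw [ite_and]
    rw [Finset.sum_ite_eq (Finset.univ : Finset (Fin M)) (E 0), Finset.sum_ite_eq' (Finset.univ : Finset (Fin M)) e]
    simp


section
variable {n m : ℕ} {src tgt : Fin m → Fin n} {w : Fin m → ℝ}

/-- endpoints of edge steps along the walk induced by an edge sequence -/
lemma snoc_succ {k : ℕ} (E : Fin (k+1) → Fin m)
    (ch : ∀ s : Fin k, tgt (E s.castSucc) = src (E s.succ)) (u : Fin (k+1)) :
    (Fin.snoc (fun s => src (E s)) (tgt (E (Fin.last k))) : Fin (k+2) → Fin n) u.succ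
      = tgt (E u) := by
  induction u using Fin.lastCases with
  | last => rw [Fin.succ_last, Fin.snoc_last]
  | cast s => rw [Fin.succ_castSucc, Fin.snoc_castSucc]; exact (ch s).symm

lemma snoc_cast {k : ℕ} (E : Fin (k+1) → Fin m) (u : Fin (k+1)) :
    (Fin.snoc (fun s => src (E s)) (tgt (E (Fin.last k))) : Fin (k+2) → Fin n) u.castSucc
      = src (E u) :=
  Fin.snoc_castSucc _ _ _

lemma walk_eq_edge (hinj : Function.Injective fun e => (src e, tgt e))
    (A : Matrix (Fin n) (Fin n) ℝ)
    (hA : ∀ e, A (src e) (tgt e) = w e)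
    (hA0 : ∀ i j, (∀ e, ¬(src e = i ∧ tgt e = j)) → A i j = 0)
    (k : ℕ) (i j : Fin n) :
    (∑ v ∈ Finset.univ.filter (fun v : Fin (k + 2) → Fin n =>
          v 0 = i ∧ v (Fin.last (k + 1)) = j ∧
          ∀ t : Fin k, v t.castSucc.castSucc ≠ v t.succ.succ),
        ∏ t : Fin (k + 1), A (v t.castSucc) (v t.succ))
    = ∑ E : Fin (k+1) → Fin m,
        if src (E 0) = i ∧ tgt (E (Fin.last k)) = j ∧
            (∀ s : Fin k, tgt (E s.castSucc) = src (E s.succ)) ∧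
            (∀ s : Fin k, src (E s.castSucc) ≠ tgt (E s.succ)) then
          ∏ s : Fin (k+1), w (E s) else 0 := by
  -- Step A : restrict to walks all of whose steps are edges
  have stepA : (∑ v ∈ Finset.univ.filter (fun v : Fin (k + 2) → Fin n =>
          v 0 = i ∧ v (Fin.last (k + 1)) = j ∧
          ∀ t : Fin k, v t.castSucc.castSucc ≠ v t.succ.succ),
        ∏ t : Fin (k + 1), A (v t.castSucc) (v t.succ))
      = ∑ v ∈ Finset.univ.filter (fun v : Fin (k + 2) → Fin n =>
          (v 0 = i ∧ v (Fin.last (k + 1)) = j ∧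
          ∀ t : Fin k, v t.castSucc.castSucc ≠ v t.succ.succ) ∧
          ∀ t : Fin (k+1), ∃ e, src e = v t.castSucc ∧ tgt e = v t.succ),
        ∏ t : Fin (k + 1), A (v t.castSucc) (v t.succ) := by
    refine (Finset.sum_subset ?_ ?_).symm
    · intro v hv
      simp only [Finset.mem_filter] at hv ⊢
      exact ⟨hv.1, hv.2.1⟩
    · intro v hv hv'
      simp only [Finset.mem_filter, Finset.mem_univ, true_and] at hv hv'
      have : ¬ ∀ t : Fin (k+1), ∃ e, src e = v t.castSucc ∧ tgt e = v t.succ := by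
        intro h; exact hv' ⟨hv, h⟩
      push_neg at this
      obtain ⟨t, htt⟩ := this
      exact Finset.prod_eq_zero (Finset.mem_univ t)
        (hA0 _ _ (fun e he => htt e he.1 he.2))
  rw [stepA, ← Finset.sum_filter]
  refine (Finset.sum_bij
    (i := fun E _ => (Fin.snoc (fun s => src (E s)) (tgt (E (Fin.last k))) : Fin (k+2) → Fin n))
    ?_ ?_ ?_ ?_).symm
  · -- maps into the target filter
    intro E hE
    simp only [Finset.mem_filter, Finset.mem_univ, true_and] at hE ⊢
    obtain ⟨h0, hl, ch, nb⟩ := hE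
    refine ⟨⟨?_, ?_, ?_⟩, ?_⟩
    · rw [← Fin.castSucc_zero, snoc_cast]; exact h0
    · rw [← Fin.succ_last, snoc_succ E ch]; exact hl
    · intro t
      rw [snoc_cast, snoc_succ E ch]
      exact nb t
    · intro t
      exact ⟨E t, (snoc_cast E t).symm, (snoc_succ E ch t).symm⟩
  · -- injectivity
    intro E₁ h₁ E₂ h₂ hphi
    simp only [Finset.mem_filter, Finset.mem_univ, true_and] at h₁ h₂
    funext u
    apply hinj
    have hc := congrFun hphi u.castSucc
    have hs := congrFun hphi u.succ
    beta_reduce at hc hs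
    rw [snoc_cast, snoc_cast] at hc
    rw [snoc_succ E₁ h₁.2.2.1, snoc_succ E₂ h₂.2.2.1] at hs
    exact Prod.ext hc hs
  · -- surjectivity
    intro v hv
    simp only [Finset.mem_filter, Finset.mem_univ, true_and] at hv
    obtain ⟨⟨h0, hl, nb⟩, hedge⟩ := hv
    refine ⟨fun t => (hedge t).choose, ?_, ?_⟩
    · simp only [Finset.mem_filter, Finset.mem_univ, true_and]
      have hsrc : ∀ t : Fin (k+1), src ((hedge t).choose) = v t.castSucc :=
        fun t => (hedge t).choose_spec.1
      have htgt : ∀ t : Fin (k+1), tgt ((hedge t).choose) = v t.succ :=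
        fun t => (hedge t).choose_spec.2
      refine ⟨?_, ?_, ?_, ?_⟩
      · rw [hsrc, Fin.castSucc_zero]; exact h0
      · rw [htgt, Fin.succ_last]; exact hl
      · intro s
        rw [htgt, hsrc, Fin.succ_castSucc]
      · intro s
        rw [hsrc, htgt]
        exact nb s
    · funext u
      beta_reduce
      induction u using Fin.lastCases with
      | last =>
        rw [Fin.snoc_last, (hedge (Fin.last k)).choose_spec.2, Fin.succ_last]
      | cast s =>
        rw [Fin.snoc_castSucc]
        exact (hedge s).choose_spec.1
  · -- values agree
    intro E hE
    simp only [Finset.mem_filter, Finset.mem_univ, true_and] at hE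
    refine Finset.prod_congr rfl fun t _ => ?_
    beta_reduce
    rw [snoc_cast, snoc_succ E hE.2.2.1, hA]

end



section
variable {n m : ℕ} {src tgt : Fin m → Fin n} {w : Fin m → ℝ}

lemma V_apply (hw : ∀ e, 0 < w e)
    {W : Matrix (Fin m) (Fin m) ℝ} (hW : ∀ e f, W e f = if tgt e = src f then w e * w f else 0)
    {B : Matrix (Fin m) (Fin m) ℝ} (hB : ∀ e f, B e f = if W e f * W f e = 0 then W e f else 0)
    (e f : Fin m) :
    esqrt B e f = if tgt e = src f ∧ ¬(tgt f = src e) then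
      Real.sqrt (w e) * Real.sqrt (w f) else 0 := by
  show Real.sqrt (B e f) = _
  rw [hB, hW e f, hW f e]
  by_cases h1 : tgt e = src f <;> by_cases h2 : tgt f = src e <;>
    simp [h1, h2, Real.sqrt_mul, (hw e).le, (hw f).le,
      mul_ne_zero (hw e).ne' (hw f).ne', mul_ne_zero (hw f).ne' (hw e).ne']

lemma term_eq (hw : ∀ e, 0 < w e)
    {W : Matrix (Fin m) (Fin m) ℝ} (hW : ∀ e f, W e f = if tgt e = src f then w e * w f else 0)
    {B : Matrix (Fin m) (Fin m) ℝ} (hB : ∀ e f, B e f = if W e f * W f e = 0 then W e f else 0)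
    (k : ℕ) (i j : Fin n) (E : Fin (k+1) → Fin m) :
    (if src (E 0) = i then Real.sqrt (w (E 0)) else 0)
      * (∏ s : Fin k, esqrt B (E s.castSucc) (E s.succ))
      * (if tgt (E (Fin.last k)) = j then Real.sqrt (w (E (Fin.last k))) else 0)
    = if src (E 0) = i ∧ tgt (E (Fin.last k)) = j ∧
          (∀ s : Fin k, tgt (E s.castSucc) = src (E s.succ)) ∧
          (∀ s : Fin k, src (E s.castSucc) ≠ tgt (E s.succ)) then
        ∏ s : Fin (k+1), w (E s) else 0 := by
  by_cases hch : (∀ s : Fin k, tgt (E s.castSucc) = src (E s.succ)) ∧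
      (∀ s : Fin k, src (E s.castSucc) ≠ tgt (E s.succ))
  · have hV : ∀ s : Fin k, esqrt B (E s.castSucc) (E s.succ)
        = Real.sqrt (w (E s.castSucc)) * Real.sqrt (w (E s.succ)) := fun s => by
      rw [V_apply hw hW hB, if_pos ⟨hch.1 s, fun h => hch.2 s h.symm⟩]
    by_cases h0 : src (E 0) = i
    · by_cases hl : tgt (E (Fin.last k)) = j
      · have hgood : src (E 0) = i ∧ tgt (E (Fin.last k)) = j ∧
            (∀ s : Fin k, tgt (E s.castSucc) = src (E s.succ)) ∧
            (∀ s : Fin k, src (E s.castSucc) ≠ tgt (E s.succ)) := ⟨h0, hl, hch.1, hch.2⟩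
        rw [if_pos h0, if_pos hl, if_pos hgood]
        calc Real.sqrt (w (E 0)) * (∏ s : Fin k, esqrt B (E s.castSucc) (E s.succ))
              * Real.sqrt (w (E (Fin.last k)))
            = (Real.sqrt (w (E 0)) * ∏ s : Fin k, Real.sqrt (w (E s.succ)))
              * ((∏ s : Fin k, Real.sqrt (w (E s.castSucc))) * Real.sqrt (w (E (Fin.last k)))) := by
              simp_rw [hV]
              rw [Finset.prod_mul_distrib]
              ring
          _ = (∏ u : Fin (k+1), Real.sqrt (w (E u))) * ∏ u : Fin (k+1), Real.sqrt (w (E u)) := by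
              rw [← Fin.prod_univ_succ (fun u => Real.sqrt (w (E u))),
                ← Fin.prod_univ_castSucc (fun u => Real.sqrt (w (E u)))]
          _ = ∏ u : Fin (k+1), w (E u) := by
              rw [← Finset.prod_mul_distrib]
              exact Finset.prod_congr rfl fun u _ => Real.mul_self_sqrt (hw (E u)).le
      · rw [if_neg hl, mul_zero, if_neg (fun h => hl h.2.1)]
    · rw [if_neg h0, zero_mul, zero_mul, if_neg (fun h => h0 h.1)]
  · have hz : ∃ s : Fin k, esqrt B (E s.castSucc) (E s.succ) = 0 := by
      rcases not_and_or.mp hch with h | h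
      · push_neg at h
        obtain ⟨s, hs⟩ := h
        exact ⟨s, by rw [V_apply hw hW hB, if_neg (fun hx => hs hx.1)]⟩
      · push_neg at h
        obtain ⟨s, hs⟩ := h
        exact ⟨s, by rw [V_apply hw hW hB, if_neg (fun hx => hx.2 hs.symm)]⟩
    obtain ⟨s, hs⟩ := hz
    rw [Finset.prod_eq_zero (Finset.mem_univ s) hs, mul_zero, zero_mul,
      if_neg (fun h => hch ⟨h.2.2.1, h.2.2.2⟩)]

end

section projsec
variable {n m : ℕ} {src tgt : Fin m → Fin n} {w : Fin m → ℝ}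

lemma proj_eq (hw : ∀ e, 0 < w e)
    (hinj : Function.Injective fun e => (src e, tgt e))
    (A : Matrix (Fin n) (Fin n) ℝ)
    (hA : ∀ e, A (src e) (tgt e) = w e)
    (hA0 : ∀ i j, (∀ e, ¬(src e = i ∧ tgt e = j)) → A i j = 0)
    {W : Matrix (Fin m) (Fin m) ℝ} (hW : ∀ e f, W e f = if tgt e = src f then w e * w f else 0)
    {B : Matrix (Fin m) (Fin m) ℝ} (hB : ∀ e f, B e f = if W e f * W f e = 0 then W e f else 0)
    (k : ℕ) (i j : Fin n) :
    ((incMat src)ᵀ * Matrix.diagonal (fun e => Real.sqrt (w e)) * (esqrt B ^ k)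
      * Matrix.diagonal (fun e => Real.sqrt (w e)) * incMat tgt) i j
    = ∑ v ∈ Finset.univ.filter (fun v : Fin (k + 2) → Fin n =>
          v 0 = i ∧ v (Fin.last (k + 1)) = j ∧
          ∀ t : Fin k, v t.castSucc.castSucc ≠ v t.succ.succ),
        ∏ t : Fin (k + 1), A (v t.castSucc) (v t.succ) := by
  rw [walk_eq_edge hinj A hA hA0 k i j]
  have hLD : ∀ e : Fin m, ((incMat src)ᵀ * Matrix.diagonal (fun e => Real.sqrt (w e))) i e
      = if src e = i then Real.sqrt (w e) else 0 := by
    intro e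
    rw [Matrix.mul_diagonal, Matrix.transpose_apply]
    show (if src e = i then (1:ℝ) else 0) * Real.sqrt (w e) = _
    by_cases h : src e = i <;> simp [h]
  have hDR : ∀ f : Fin m, (Matrix.diagonal (fun e => Real.sqrt (w e)) * incMat tgt) f j
      = if tgt f = j then Real.sqrt (w f) else 0 := by
    intro f
    rw [Matrix.diagonal_mul]
    show Real.sqrt (w f) * (if tgt f = j then (1:ℝ) else 0) = _
    by_cases h : tgt f = j <;> simp [h]
  rw [Matrix.mul_assoc ((incMat src)ᵀ * Matrix.diagonal (fun e => Real.sqrt (w e)) * (esqrt B ^ k))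
      (Matrix.diagonal (fun e => Real.sqrt (w e))) (incMat tgt),
    Matrix.mul_assoc ((incMat src)ᵀ * Matrix.diagonal (fun e => Real.sqrt (w e))) (esqrt B ^ k)
      (Matrix.diagonal (fun e => Real.sqrt (w e)) * incMat tgt)]
  rw [Matrix.mul_apply]
  have hmid : ∀ e : Fin m,
      ((esqrt B ^ k) * (Matrix.diagonal (fun e => Real.sqrt (w e)) * incMat tgt)) e j
      = ∑ f, (esqrt B ^ k) e f * (if tgt f = j then Real.sqrt (w f) else 0) := by
    intro e
    rw [Matrix.mul_apply]
    exact Finset.sum_congr rfl fun f _ => by rw [hDR]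
  simp_rw [hmid, hLD, pow_path]
  have step0 : ∀ e : Fin m,
      (if src e = i then Real.sqrt (w e) else 0) *
        ∑ f : Fin m, (∑ E : Fin (k+1) → Fin m, if E 0 = e ∧ E (Fin.last k) = f then
            (∏ s : Fin k, esqrt B (E s.castSucc) (E s.succ)) else 0) *
          (if tgt f = j then Real.sqrt (w f) else 0)
      = ∑ E : Fin (k+1) → Fin m, if E 0 = e then
            (if src e = i then Real.sqrt (w e) else 0) *
            (∏ s : Fin k, esqrt B (E s.castSucc) (E s.succ)) *
            (if tgt (E (Fin.last k)) = j then Real.sqrt (w (E (Fin.last k))) else 0)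
          else 0 := by
    intro e
    rw [Finset.mul_sum]
    have inner : ∀ f : Fin m, (if src e = i then Real.sqrt (w e) else 0) *
        ((∑ E : Fin (k+1) → Fin m, if E 0 = e ∧ E (Fin.last k) = f then
            (∏ s : Fin k, esqrt B (E s.castSucc) (E s.succ)) else 0) *
          (if tgt f = j then Real.sqrt (w f) else 0))
        = ∑ E : Fin (k+1) → Fin m, if E 0 = e ∧ E (Fin.last k) = f then
            (if src e = i then Real.sqrt (w e) else 0) *
            (∏ s : Fin k, esqrt B (E s.castSucc) (E s.succ)) *
            (if tgt f = j then Real.sqrt (w f) else 0) else 0 := by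
      intro f
      rw [Finset.sum_mul, Finset.mul_sum]
      refine Finset.sum_congr rfl fun E _ => ?_
      by_cases h : E 0 = e ∧ E (Fin.last k) = f
      · rw [if_pos h, if_pos h]; ring
      · rw [if_neg h, if_neg h]; ring
    simp_rw [inner]
    rw [Finset.sum_comm]
    refine Finset.sum_congr rfl fun E _ => ?_
    simp_rw [ite_and]
    by_cases h : E 0 = e
    · simp only [h, eq_self_iff_true, if_true]
      rw [Finset.sum_ite_eq (Finset.univ : Finset (Fin m)) (E (Fin.last k))]
      simp
    · simp [h]
  simp_rw [step0]
  rw [Finset.sum_comm]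
  refine Finset.sum_congr rfl fun E _ => ?_
  rw [Finset.sum_ite_eq (Finset.univ : Finset (Fin m)) (E 0)]
  simp only [Finset.mem_univ, if_true]
  exact term_eq hw hW hB k i j E

end projsec

section analytic
open Filter
attribute [local instance] Matrix.linftyOpNormedRing Matrix.linftyOpNormedAlgebra

lemma entry_le_norm {m : ℕ} (M : Matrix (Fin m) (Fin m) ℂ) (a b : Fin m) : ‖M a b‖ ≤ ‖M‖ := by
  have h1 : ‖M a b‖₊ ≤ ∑ j, ‖M a j‖₊ :=
    Finset.single_le_sum (f := fun j => ‖M a j‖₊) (fun _ _ => zero_le) (Finset.mem_univ b)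
  have h2 : (∑ j, ‖M a j‖₊) ≤ ‖M‖₊ := by
    rw [Matrix.linfty_opNNNorm_def]
    exact Finset.le_sup (f := fun i => ∑ j, ‖M i j‖₊) (Finset.mem_univ a)
  exact_mod_cast h1.trans h2

set_option maxHeartbeats 1000000 in
lemma summ_aux {m : ℕ} (V : Matrix (Fin m) (Fin m) ℝ) (c : ℕ → ℝ) (hc : ∀ k, 0 ≤ c k)
    (r t : ℝ) (hr : ∀ x : ℝ, |x| < r → Summable (fun k : ℕ => c k * x ^ k))
    (ht : |t| * specRad V < r) (e f : Fin m) :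
    Summable (fun k : ℕ => c (k + 1) * t ^ k * (V ^ k) e f) := by
  by_cases htz : t = 0
  · subst htz
    refine summable_of_ne_finset_zero (s := {0}) ?_
    intro k hk
    have : (0:ℝ) ^ k = 0 := zero_pow (by simpa using hk)
    simp [this]
  have hmne : Nonempty (Fin m) := ⟨e⟩
  set Vc : Matrix (Fin m) (Fin m) ℂ := V.map Complex.ofReal with hVc
  have hmap : ∀ k : ℕ, Vc ^ k = (V ^ k).map Complex.ofReal := by
    intro k
    have h0 : Vc = Complex.ofRealHom.mapMatrix V := rfl
    rw [h0, ← map_pow]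
    rfl
  have hSbdd : BddAbove {x : ℝ | ∃ μ ∈ spectrum ℂ Vc, x = ‖μ‖} := by
    refine ⟨‖Vc‖, ?_⟩
    rintro x ⟨μ, hμ, rfl⟩
    exact spectrum.norm_le_norm_of_mem hμ
  have hρ0 : 0 ≤ specRad V := by
    obtain ⟨μ, hμ⟩ := spectrum.nonempty Vc
    exact le_trans (norm_nonneg μ) (le_csSup hSbdd ⟨μ, hμ, rfl⟩)
  have hsub : spectralRadius ℂ Vc ≤ ENNReal.ofReal (specRad V) := by
    rw [spectralRadius]
    refine iSup₂_le fun μ hμ => ?_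
    rw [show ((‖μ‖₊ : NNReal) : ENNReal) = ENNReal.ofReal ‖μ‖ from (ofReal_norm μ).symm]
    refine ENNReal.ofReal_le_ofReal ?_
    exact le_csSup hSbdd ⟨μ, hμ, rfl⟩
  -- choose x with specRad V < x and |t| * x < r
  have htpos : 0 < |t| := abs_pos.mpr htz
  set x : ℝ := (specRad V + r / |t|) / 2 with hxdef
  have hρr : specRad V < r / |t| := by
    rw [lt_div_iff₀ htpos]
    linarith [ht, mul_comm (|t|) (specRad V)]
  have hx1 : specRad V < x := by rw [hxdef]; linarith
  have hx0 : 0 < x := lt_of_le_of_lt hρ0 hx1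
  have hx2 : |t| * x < r := by
    rw [hxdef]
    have : x < r / |t| := by rw [hxdef]; linarith
    calc |t| * ((specRad V + r / |t|) / 2) < |t| * (r / |t|) := by
          apply mul_lt_mul_of_pos_left _ htpos
          linarith
      _ = r := by field_simp
  -- eventual norm bound
  have hgel := spectrum.pow_nnnorm_pow_one_div_tendsto_nhds_spectralRadius Vc
  have hlt : spectralRadius ℂ Vc < ENNReal.ofReal x :=
    lt_of_le_of_lt hsub (by
      rw [ENNReal.ofReal_lt_ofReal_iff hx0]
      exact hx1)
  have hev0 : ∀ᶠ k : ℕ in atTop, (‖Vc ^ k‖₊ : ENNReal) ^ (1 / (k:ℝ)) < ENNReal.ofReal x :=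
    hgel.eventually_lt_const hlt
  have hev : ∀ᶠ k : ℕ in atTop, ‖Vc ^ k‖ ≤ x ^ k := by
    filter_upwards [hev0, eventually_ge_atTop 1] with k hk hk1
    have hk0 : (k:ℝ) ≠ 0 := by positivity
    have h1 : (‖Vc ^ k‖₊ : ENNReal) ≤ (ENNReal.ofReal x) ^ (k:ℝ) := by
      have h2 := ENNReal.rpow_le_rpow hk.le (le_of_lt (by positivity : (0:ℝ) < (k:ℝ)))
      rwa [← ENNReal.rpow_mul, one_div, inv_mul_cancel₀ hk0, ENNReal.rpow_one] at h2
    have h3 : (ENNReal.ofReal x) ^ ((k:ℕ):ℝ) = ENNReal.ofReal (x ^ (k:ℕ)) := by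
      rw [ENNReal.ofReal_rpow_of_pos hx0, Real.rpow_natCast]
    rw [h3] at h1
    rw [show ((‖Vc ^ k‖₊ : NNReal) : ENNReal) = ENNReal.ofReal ‖Vc ^ k‖ from (ofReal_norm _).symm] at h1
    exact (ENNReal.ofReal_le_ofReal_iff (by positivity)).mp h1
  -- comparison series
  set y : ℝ := |t| * x with hydef
  have hy0 : 0 < y := mul_pos htpos hx0
  have hyr : |y| < r := by rw [abs_of_pos hy0]; exact hx2
  have hsum1 : Summable (fun k : ℕ => c (k + 1) * y ^ (k + 1)) :=
    (summable_nat_add_iff 1).mpr (hr y hyr)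
  have hsum2 : Summable (fun k : ℕ => c (k + 1) * y ^ k) := by
    have := hsum1.mul_right y⁻¹
    refine this.congr fun k => ?_
    field_simp [hy0.ne']
    ring
  refine Summable.of_norm_bounded_eventually_nat hsum2 ?_
  filter_upwards [hev] with k hk
  have hentry : |(V ^ k) e f| ≤ x ^ k := by
    have h1 : ‖(Vc ^ k) e f‖ ≤ ‖Vc ^ k‖ := entry_le_norm _ e f
    rw [hmap k] at h1
    have h2 : ‖((V ^ k).map Complex.ofReal) e f‖ = |(V ^ k) e f| := by
      simp [Matrix.map_apply]
    rw [h2] at h1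
    exact h1.trans (by rw [← hmap k] at *; exact hk)
  rw [norm_mul, norm_mul]
  rw [hydef, mul_pow]
  have hcn : ‖c (k+1)‖ = c (k+1) := abs_of_nonneg (hc (k+1))
  rw [hcn]
  rw [mul_assoc]
  refine mul_le_mul_of_nonneg_left ?_ (hc (k+1))
  have : ‖t ^ k‖ = |t| ^ k := by rw [Real.norm_eq_abs, abs_pow]
  rw [this]
  calc |t| ^ k * ‖(V ^ k) e f‖ ≤ |t| ^ k * x ^ k :=
        mul_le_mul_of_nonneg_left hentry (by positivity)
    _ = |t| ^ k * x ^ k := rfl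

end analytic

/-- let `f(x) = ∑ c_k x^k` have nonnegative coefficients and radius of
convergence (at least) `r`, and let `V = B^{∘1/2}`.  For `|t| < r / ρ(V)`,
`∑_{k≥0} c_k t^k p_k(A) = c_0 I + t Lᵀ √Z ∂f(tV) √Z R`, where
`∂f(tV) = ∑_{k≥0} c_{k+1} t^k V^k`. -/
theorem stmt12 {n m : ℕ} (src tgt : Fin m → Fin n) (w : Fin m → ℝ)
    (hw : ∀ e, 0 < w e)
    (hinj : Function.Injective fun e => (src e, tgt e))
    (hloop : ∀ e, src e ≠ tgt e)
    (A : Matrix (Fin n) (Fin n) ℝ)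
    (hA : ∀ e, A (src e) (tgt e) = w e)
    (hA0 : ∀ i j, (∀ e, ¬(src e = i ∧ tgt e = j)) → A i j = 0)
    (W : Matrix (Fin m) (Fin m) ℝ)
    (hW : ∀ e f, W e f = if tgt e = src f then w e * w f else 0)
    (B : Matrix (Fin m) (Fin m) ℝ)
    (hB : ∀ e f, B e f = if W e f * W f e = 0 then W e f else 0)
    (c : ℕ → ℝ) (hc : ∀ k, 0 ≤ c k) (r : ℝ)
    (hr : ∀ x : ℝ, |x| < r → Summable (fun k : ℕ => c k * x ^ k))
    (t : ℝ) (ht : |t| * specRad (esqrt B) < r) :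
    ∀ i j, HasSum (fun k : ℕ => c k * t ^ k * pMat A k i j)
      ((c 0 • (1 : Matrix (Fin n) (Fin n) ℝ) +
        t • ((incMat src)ᵀ * Matrix.diagonal (fun e => Real.sqrt (w e)) *
          (Matrix.of fun e f => ∑' k : ℕ, c (k + 1) * t ^ k * ((esqrt B) ^ k) e f) *
          Matrix.diagonal (fun e => Real.sqrt (w e)) * incMat tgt)) i j) := by
  intro i j
  classical
  set V : Matrix (Fin m) (Fin m) ℝ := esqrt B with hV
  set D : Matrix (Fin m) (Fin m) ℝ := Matrix.diagonal (fun e => Real.sqrt (w e)) with hD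
  set S : Matrix (Fin m) (Fin m) ℝ :=
    Matrix.of fun e f => ∑' k : ℕ, c (k + 1) * t ^ k * (V ^ k) e f with hSdef
  have hsum : ∀ e f, Summable (fun k : ℕ => c (k + 1) * t ^ k * (V ^ k) e f) :=
    fun e f => summ_aux V c hc r t hr ht e f
  have hS : ∀ e f, HasSum (fun k : ℕ => c (k + 1) * t ^ k * (V ^ k) e f) (S e f) := by
    intro e f
    have : S e f = ∑' k : ℕ, c (k + 1) * t ^ k * (V ^ k) e f := rfl
    rw [this]
    exact (hsum e f).hasSum
  have hF : ∀ M : Matrix (Fin m) (Fin m) ℝ,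
      ((incMat src)ᵀ * D * M * D * incMat tgt) i j
      = ∑ e, ∑ f, ((incMat src)ᵀ * D) i e * M e f * ((D * incMat tgt) f j) := by
    intro M
    rw [Matrix.mul_assoc ((incMat src)ᵀ * D * M) D (incMat tgt),
      Matrix.mul_assoc ((incMat src)ᵀ * D) M (D * incMat tgt), Matrix.mul_apply]
    refine Finset.sum_congr rfl fun e _ => ?_
    rw [Matrix.mul_apply (M := M) (N := D * incMat tgt), Finset.mul_sum]
    refine Finset.sum_congr rfl fun f _ => ?_
    ring
  have hproj : ∀ k : ℕ, pMat A (k+1) i j = ((incMat src)ᵀ * D * (V ^ k) * D * incMat tgt) i j := by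
    intro k
    exact (proj_eq hw hinj A hA hA0 hW hB k i j).symm
  have hmain : HasSum (fun k : ℕ => c (k+1) * t ^ (k+1) * pMat A (k+1) i j)
      (t * (((incMat src)ᵀ * D * S * D * incMat tgt) i j)) := by
    have hterm : ∀ k : ℕ, c (k+1) * t ^ (k+1) * pMat A (k+1) i j
        = ∑ e, ∑ f, t * (((incMat src)ᵀ * D) i e *
            (c (k+1) * t ^ k * (V ^ k) e f) * ((D * incMat tgt) f j)) := by
      intro k
      rw [hproj k, hF (V ^ k), Finset.mul_sum]
      refine Finset.sum_congr rfl fun e _ => ?_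
      rw [Finset.mul_sum]
      refine Finset.sum_congr rfl fun f _ => ?_
      rw [pow_succ]
      ring
    have htarget : t * (((incMat src)ᵀ * D * S * D * incMat tgt) i j)
        = ∑ e, ∑ f, t * (((incMat src)ᵀ * D) i e * S e f * ((D * incMat tgt) f j)) := by
      rw [hF S, Finset.mul_sum]
      exact Finset.sum_congr rfl fun e _ => by rw [Finset.mul_sum]
    rw [htarget]
    have heq : (fun k : ℕ => c (k+1) * t ^ (k+1) * pMat A (k+1) i j)
        = fun k : ℕ => ∑ e, ∑ f, t * (((incMat src)ᵀ * D) i e *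
            (c (k+1) * t ^ k * (V ^ k) e f) * ((D * incMat tgt) f j)) := funext hterm
    rw [heq]
    exact hasSum_sum fun e _ => hasSum_sum fun f _ =>
      ((((hS e f).mul_left (((incMat src)ᵀ * D) i e)).mul_right
        ((D * incMat tgt) f j)).mul_left t)
  have hfinal := (hasSum_nat_add_iff
    (f := fun k : ℕ => c k * t ^ k * pMat A k i j) 1).mp hmain
  have h0 : ∑ x ∈ Finset.range 1, c x * t ^ x * pMat A x i j
      = c 0 * (1 : Matrix (Fin n) (Fin n) ℝ) i j := by
    rw [Finset.sum_range_one]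
    simp [pMat]
  rw [h0] at hfinal
  have hgoal : ((c 0 • (1 : Matrix (Fin n) (Fin n) ℝ) +
        t • ((incMat src)ᵀ * Matrix.diagonal (fun e => Real.sqrt (w e)) *
          (Matrix.of fun e f => ∑' k : ℕ, c (k + 1) * t ^ k * ((esqrt B) ^ k) e f) *
          Matrix.diagonal (fun e => Real.sqrt (w e)) * incMat tgt)) i j)
      = t * (((incMat src)ᵀ * D * S * D * incMat tgt) i j)
        + c 0 * (1 : Matrix (Fin n) (Fin n) ℝ) i j := by
    rw [Matrix.add_apply, Matrix.smul_apply, Matrix.smul_apply, smul_eq_mul, smul_eq_mul]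
    rw [add_comm]
  rw [hgoal]
  exact hfinal
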